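/- Let λ, μ ∈ F_q^* and α ∈ F_q^* with λ·α^([n]_s) = μ. If C ⊆ F_q^n is a skew (σ,μ)-constacyclic code, then its image D_α(C) = {D_α(c) : c ∈ C} is a skew (σ,λ)-constacyclic code; moreover D_α is a bijective F_q-linear map that preserves the Hamming weight, i.e., wt(D_α(c)) = wt(c) for all c ∈ F_q^n. In particular, skew (σ,μ)-constacyclic codes of length n and skew (σ,λ)-constacyclic codes of length n are equivalent via a Hamming-weight-preserving linear bijection. -/

import Mathlib

/-- The skew constacyclic shift `T_{σ,λ}` on `F^n`:
`T_{σ,λ}(c)_0 = λ·σ(c_{n−1})` and `T_{σ,λ}(c)_i = σ(c_{i−1})` for `1 ≤ i ≤ n−1`.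
(Here `i - 1` is subtraction in `Fin n`, so `0 - 1 = n - 1`.) -/
def skewShift {F : Type*} [Field F] {n : ℕ} [NeZero n] (σ : F → F) (lam : F)
    (c : Fin n → F) : Fin n → F :=
  fun i => if i = 0 then lam * σ (c (i - 1)) else σ (c (i - 1))

/-- The diagonal map `D_α : F^n → F^n`, `(D_α(c))_i = α^([i]_s)·c_i`,
where `[i]_s = ∑_{j<i} p^(s·j)`. -/
def diagMap (p s : ℕ) {F : Type*} [Field F] {n : ℕ} (α : F) (c : Fin n → F) :
    Fin n → F :=
  fun i => α ^ (∑ j ∈ Finset.range (i : ℕ), p ^ (s * j)) * c i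

lemma key_sum (p s m : ℕ) :
    ∑ j ∈ Finset.range (m + 1), p ^ (s * j)
      = 1 + p ^ s * ∑ j ∈ Finset.range m, p ^ (s * j) := by
  rw [Finset.sum_range_succ', Finset.mul_sum, Nat.add_comm]
  congr 1
  exact Finset.sum_congr rfl fun j _ => by rw [Nat.mul_succ, pow_add, mul_comm]

/-- Let `λ, μ, α ∈ F_q^*` with `λ·α^([n]_s) = μ` and `σ : a ↦ a^(p^s)`.
If `C ⊆ F_q^n` is a skew `(σ,μ)`-constacyclic code, then `D_α(C)` is a skew
`(σ,λ)`-constacyclic code; moreover `D_α` is a bijective `F_q`-linear map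
preserving the Hamming weight. In particular, skew `(σ,μ)`-constacyclic codes and
skew `(σ,λ)`-constacyclic codes of length `n` are equivalent via a
Hamming-weight-preserving linear bijection. -/
theorem stmt_9 (p r s n : ℕ) (hp : p.Prime) (hr : 1 ≤ r) (hs : s < r) [NeZero n]
    (F : Type*) [Field F] [Fintype F] [DecidableEq F] (hF : Fintype.card F = p ^ r)
    (lam mu α : F) (hlam : lam ≠ 0) (hmu : mu ≠ 0) (hα : α ≠ 0)
    (h : lam * α ^ (∑ j ∈ Finset.range n, p ^ (s * j)) = mu)
    (C : Submodule F (Fin n → F))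
    (hC : ∀ c ∈ C, skewShift (fun a : F => a ^ p ^ s) mu c ∈ C) :
    (∃ C' : Submodule F (Fin n → F),
        (C' : Set (Fin n → F)) = diagMap p s α '' (C : Set (Fin n → F)) ∧
        ∀ c ∈ C', skewShift (fun a : F => a ^ p ^ s) lam c ∈ C') ∧
    Function.Bijective (diagMap p s α (n := n)) ∧
    IsLinearMap F (diagMap p s α (n := n)) ∧
    ∀ c : Fin n → F, hammingNorm (diagMap p s α c) = hammingNorm c := by
  classical
  obtain ⟨m, rfl⟩ : ∃ m, n = m + 1 :=
    ⟨n - 1, (Nat.succ_pred_eq_of_pos (Nat.pos_of_ne_zero (NeZero.ne n))).symm⟩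
  have hlin : IsLinearMap F (diagMap p s α (n := m + 1)) := by
    constructor
    · intro x y; funext i; simp [diagMap, mul_add]
    · intro a x; funext i; simp [diagMap, smul_eq_mul]; ring
  have hbij : Function.Bijective (diagMap p s α (n := m + 1)) := by
    refine Function.bijective_iff_has_inverse.2 ⟨diagMap p s α⁻¹, ?_, ?_⟩
    · intro c; funext i
      simp only [diagMap, inv_pow]
      exact inv_mul_cancel_left₀ (pow_ne_zero _ hα) _
    · intro c; funext i
      simp only [diagMap, inv_pow]
      exact mul_inv_cancel_left₀ (pow_ne_zero _ hα) _
  have key : ∀ c : Fin (m + 1) → F,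
      skewShift (fun a : F => a ^ p ^ s) lam (diagMap p s α c)
        = α⁻¹ • diagMap p s α (skewShift (fun a : F => a ^ p ^ s) mu c) := by
    intro c
    funext i
    by_cases hi : i = 0
    · subst hi
      have hn1 : ((0 - 1 : Fin (m + 1)) : ℕ) = m := by
        simp [Fin.coe_sub_one]
      simp only [skewShift, if_pos rfl, if_true, Pi.smul_apply, smul_eq_mul, diagMap, hn1, ← h,
        key_sum p s m, Fin.val_zero, Finset.range_zero, Finset.sum_empty, pow_zero, one_mul,
        mul_pow, ← pow_mul, pow_add, pow_one]
      field_simp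
      ring
    · have hv : (i : ℕ) ≠ 0 := fun hv => hi (Fin.ext hv)
      have hi1 : ((i - 1 : Fin (m + 1)) : ℕ) = (i : ℕ) - 1 := by
        rw [Fin.coe_sub_one, if_neg hi]
      have hsum : ∑ j ∈ Finset.range (i : ℕ), p ^ (s * j)
          = 1 + p ^ s * ∑ j ∈ Finset.range ((i : ℕ) - 1), p ^ (s * j) := by
        conv_lhs => rw [← Nat.succ_pred_eq_of_pos (Nat.pos_of_ne_zero hv)]
        exact key_sum p s ((i : ℕ) - 1)
      simp only [skewShift, if_neg hi, Pi.smul_apply, smul_eq_mul, diagMap, hi1,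
        hsum, mul_pow, ← pow_mul, pow_add, pow_one]
      field_simp
      ring
  refine ⟨⟨Submodule.map (IsLinearMap.mk' _ hlin) C, ?_, ?_⟩, hbij, hlin, ?_⟩
  · rw [Submodule.map_coe]; rfl
  · intro c' hc'
    rcases Submodule.mem_map.1 hc' with ⟨c, hcC, rfl⟩
    rw [IsLinearMap.mk'_apply, key c]
    exact Submodule.smul_mem _ _ (Submodule.mem_map_of_mem (hC c hcC))
  · intro c
    simp only [hammingNorm]
    congr 1
    apply Finset.filter_congr
    intro i _
    simp [diagMap, mul_eq_zero, pow_eq_zero_iff, hα]
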